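/- If n is odd, then σ is a single cycle of length 2n on {1, 2, …, 2n}; equivalently, the orbit of 1 under σ, namely {1, σ(1), σ²(1), …, σ^{2n−1}(1)}, is all of {1, 2, …, 2n}. -/

import Mathlib

/-- The permutation `σ = τ ∘ T²` of the coordinates (written `0`-based on `Fin (2n)`,
whereas the paper uses the index set `{1,…,2n}`): a `0`-based index `j` with `j` even
(paper index `j+1` odd) is sent to `j + 3 (mod 2n)`, and `j` odd is sent to
`j + 1 (mod 2n)`. -/
def sigmaFn (n : ℕ) [NeZero n] (j : Fin (2 * n)) : Fin (2 * n) :=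
  if j.val % 2 = 0 then j + 3 else j + 1

open scoped Fin.NatCast Fin.CommRing

/-- If `n` is odd, then `σ` is a single cycle of length `2n` on the
`2n` coordinates: the orbit `{1, σ(1), σ²(1), …, σ^{2n−1}(1)}` of the first
coordinate (index `0` here, index `1` in the paper) is the whole index set. -/
theorem sigmaFn_single_cycle_of_odd (n : ℕ) [NeZero n] (hodd : Odd n) :
    ∀ m : Fin (2 * n), ∃ k, k < 2 * n ∧
      (sigmaFn n)^[k] ⟨0, by have := Nat.pos_of_neZero n; omega⟩ = m := by
  have hn := Nat.pos_of_neZero n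
  haveI : NeZero (2 * n) := ⟨by omega⟩
  have hpar : ∀ x : ℕ, ((x : Fin (2 * n))).val % 2 = x % 2 := by
    intro x
    rw [Fin.val_natCast]
    exact Nat.mod_mod_of_dvd x ⟨n, rfl⟩
  have hsig_even : ∀ x : Fin (2 * n), x.val % 2 = 0 → sigmaFn n x = x + 3 := by
    intro x hx; simp [sigmaFn, hx]
  have hsig_odd : ∀ x : Fin (2 * n), x.val % 2 = 1 → sigmaFn n x = x + 1 := by
    intro x hx; simp [sigmaFn, hx]
  have hiter : ∀ k : ℕ, (sigmaFn n)^[2 * k] ⟨0, by omega⟩ = ((4 * k : ℕ) : Fin (2 * n)) := by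
    intro k
    induction k with
    | zero =>
        simp only [Nat.mul_zero, Function.iterate_zero, id_eq, Nat.cast_zero]
        apply Fin.ext
        simp
    | succ k ih =>
        have h1 : 2 * (k + 1) = (2 * k) + 1 + 1 := by ring
        rw [h1, Function.iterate_succ_apply', Function.iterate_succ_apply', ih]
        have he : ((4 * k : ℕ) : Fin (2 * n)).val % 2 = 0 := by rw [hpar]; omega
        rw [hsig_even _ he]
        have h2 : ((4 * k : ℕ) : Fin (2 * n)) + 3 = ((4 * k + 3 : ℕ) : Fin (2 * n)) := by
          push_cast; ring
        rw [h2]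
        have ho : ((4 * k + 3 : ℕ) : Fin (2 * n)).val % 2 = 1 := by
          rw [hpar]; omega
        rw [hsig_odd _ ho]
        push_cast; ring
  obtain ⟨s, hs⟩ := hodd
  have hreach : ∀ e : Fin (2 * n), e.val % 2 = 0 →
      ∃ k, k < n ∧ (sigmaFn n)^[2 * k] ⟨0, by omega⟩ = e := by
    intro e he
    set t := e.val / 2 with ht
    have htlt : t < n := by have := e.isLt; omega
    refine ⟨(t * (s + 1)) % n, Nat.mod_lt _ hn, ?_⟩
    rw [hiter]
    apply Fin.ext
    rw [Fin.val_natCast]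
    have hme : (2 * ((t * (s + 1)) % n)) % n = t := by
      have h1 : 2 * ((t * (s + 1)) % n) ≡ 2 * (t * (s + 1)) [MOD n] :=
        (Nat.mod_modEq (t * (s + 1)) n).mul_left 2
      have h2 : 2 * (t * (s + 1)) = t * (n + 1) := by rw [hs]; ring
      have h3 : t * (n + 1) ≡ t * 1 [MOD n] := by
        refine Nat.ModEq.mul_left t ?_
        show (n + 1) % n = 1 % n
        exact Nat.add_mod_left n 1
      have h4 : 2 * ((t * (s + 1)) % n) ≡ t [MOD n] := by
        calc 2 * ((t * (s + 1)) % n) ≡ 2 * (t * (s + 1)) [MOD n] := h1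
          _ = t * (n + 1) := h2
          _ ≡ t * 1 [MOD n] := h3
          _ = t := by ring
      calc (2 * ((t * (s + 1)) % n)) % n = t % n := h4
        _ = t := Nat.mod_eq_of_lt htlt
    have h5 : 4 * ((t * (s + 1)) % n) = 2 * (2 * ((t * (s + 1)) % n)) := by ring
    rw [h5, Nat.mul_mod_mul_left, hme]
    omega
  intro m
  rcases Nat.even_or_odd m.val with hm | hm
  · obtain ⟨k, hk, hke⟩ := hreach m (Nat.even_iff.mp hm)
    exact ⟨2 * k, by omega, hke⟩
  · have hm1 : m.val % 2 = 1 := Nat.odd_iff.mp hm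
    set e : Fin (2 * n) := m - 3 with hedef
    have he3 : e + 3 = m := by rw [hedef]; exact sub_add_cancel m 3
    have hepar : e.val % 2 = 0 := by
      have hv : m.val = (e.val + (3 : Fin (2 * n)).val) % (2 * n) := by
        rw [← he3, Fin.add_def]
      have h3v : (3 : Fin (2 * n)).val % 2 = 1 := by
        have : ((3 : ℕ) : Fin (2 * n)).val % 2 = 3 % 2 := hpar 3
        simpa using this
      have hmod : m.val % 2 = (e.val + (3 : Fin (2 * n)).val) % 2 := by
        rw [hv]; exact Nat.mod_mod_of_dvd _ ⟨n, rfl⟩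
      rw [Nat.add_mod] at hmod
      omega
    obtain ⟨k, hk, hke⟩ := hreach e hepar
    refine ⟨2 * k + 1, by omega, ?_⟩
    rw [Function.iterate_succ_apply', hke, hsig_even _ hepar, he3]
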